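/- Let f : ℝᵖ → ℝ satisfy the bimodal Hessian condition with constants L, μ, κ_+, κ_-, ε and subspace S, and let θ_⋆ be its minimizer. Then for every θ ∈ ℝᵖ, the gradient step with the stable learning rate η = 1/L satisfies ‖Π_S(θ − (1/L)·∇f(θ) − θ_⋆)‖ ≤ (1 − 1/(2κ_+))·‖Π_S(θ − θ_⋆)‖ + (ε/L)·‖Π_{Sᶜ}(θ − θ_⋆)‖. -/

import Mathlib

open scoped RealInnerProductSpace

/-- The orthogonal projection onto a subspace `S` of `ℝᵖ`, as a map `ℝᵖ → ℝᵖ`. -/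
noncomputable def projE {p : ℕ} (S : Submodule ℝ (EuclideanSpace ℝ (Fin p)))
    (v : EuclideanSpace ℝ (Fin p)) : EuclideanSpace ℝ (Fin p) :=
  (S.orthogonalProjectionOnto v : EuclideanSpace ℝ (Fin p))

/-- The Hessian of `f : ℝᵖ → ℝ` at `x`, as the derivative of the gradient. -/
noncomputable def hessOp {p : ℕ} (f : EuclideanSpace ℝ (Fin p) → ℝ)
    (x : EuclideanSpace ℝ (Fin p)) :
    EuclideanSpace ℝ (Fin p) →L[ℝ] EuclideanSpace ℝ (Fin p) :=
  fderiv ℝ (gradient f) x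

/-- **Bimodal Hessian condition** (Definition 3): `f` is twice continuously
differentiable, `L`-smooth and `μ`-strongly convex, its Hessian restricted to the
subspace `S` has spectrum in `[L/κ₊, L]`, restricted to `Sᗮ` has spectrum in
`[μ, κ₋·μ]`, and the cross term `Π_S ∇²f(θ) Π_{Sᶜ}` has operator norm at most `ε`. -/
def BimodalHessian {p : ℕ} (f : EuclideanSpace ℝ (Fin p) → ℝ)
    (S : Submodule ℝ (EuclideanSpace ℝ (Fin p))) (L μ κp κm ε : ℝ) : Prop :=
  0 < μ ∧ μ < L ∧ 1 ≤ κp ∧ 1 ≤ κm ∧ 0 ≤ ε ∧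
  ContDiff ℝ 2 f ∧
  (∀ x v : EuclideanSpace ℝ (Fin p),
    μ * ‖v‖ ^ 2 ≤ ⟪v, hessOp f x v⟫ ∧ ⟪v, hessOp f x v⟫ ≤ L * ‖v‖ ^ 2) ∧
  (∀ x v : EuclideanSpace ℝ (Fin p),
    L / κp * ‖projE S v‖ ^ 2 ≤ ⟪projE S v, hessOp f x (projE S v)⟫ ∧
    ⟪projE S v, hessOp f x (projE S v)⟫ ≤ L * ‖projE S v‖ ^ 2) ∧
  (∀ x v : EuclideanSpace ℝ (Fin p),
    μ * ‖projE Sᗮ v‖ ^ 2 ≤ ⟪projE Sᗮ v, hessOp f x (projE Sᗮ v)⟫ ∧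
    ⟪projE Sᗮ v, hessOp f x (projE Sᗮ v)⟫ ≤ κm * μ * ‖projE Sᗮ v‖ ^ 2) ∧
  (∀ x v : EuclideanSpace ℝ (Fin p),
    ‖projE S (hessOp f x (projE Sᗮ v))‖ ≤ ε * ‖v‖)

section Aux

open InnerProductSpace intervalIntegral

variable {p : ℕ}

private lemma contDiff_gradient_aux (f : EuclideanSpace ℝ (Fin p) → ℝ) (hf : ContDiff ℝ 2 f) :
    ContDiff ℝ 1 (gradient f) := by
  have h1 : ContDiff ℝ 1 (fderiv ℝ f) := hf.fderiv_right (by norm_num)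
  have : gradient f = (fun y => (toDual ℝ (EuclideanSpace ℝ (Fin p))).symm y) ∘ fderiv ℝ f := rfl
  rw [this]
  exact ((toDual ℝ (EuclideanSpace ℝ (Fin p))).symm.contDiff.of_le le_top).comp h1

private lemma hessOp_symm_aux (f : EuclideanSpace ℝ (Fin p) → ℝ) (hf : ContDiff ℝ 2 f)
    (x a b : EuclideanSpace ℝ (Fin p)) :
    ⟪a, hessOp f x b⟫ = ⟪b, hessOp f x a⟫ := by
  have h1 : ContDiff ℝ 1 (fderiv ℝ f) := hf.fderiv_right (by norm_num)
  have hsymm : ∀ v w, fderiv ℝ (fderiv ℝ f) x v w = fderiv ℝ (fderiv ℝ f) x w v := by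
    apply second_derivative_symmetric (f := f)
    · intro y; exact (hf.differentiable (by norm_num)).differentiableAt.hasFDerivAt
    · exact (h1.differentiable one_ne_zero x).hasFDerivAt
  have key : ∀ v : EuclideanSpace ℝ (Fin p),
      hessOp f x v = (toDual ℝ (EuclideanSpace ℝ (Fin p))).symm (fderiv ℝ (fderiv ℝ f) x v) := by
    intro v
    have : gradient f = (⇑(toDual ℝ (EuclideanSpace ℝ (Fin p))).symm) ∘ fderiv ℝ f := rfl
    rw [hessOp, this, LinearIsometryEquiv.comp_fderiv]
    rfl
  rw [key, key]
  have ha : ∀ (c : EuclideanSpace ℝ (Fin p)) (y : StrongDual ℝ (EuclideanSpace ℝ (Fin p))),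
      ⟪c, (toDual ℝ (EuclideanSpace ℝ (Fin p))).symm y⟫ = y c := by
    intro c y; rw [real_inner_comm]; exact toDual_symm_apply
  rw [ha, ha]
  exact hsymm b a

private lemma gradient_min_zero_aux (f : EuclideanSpace ℝ (Fin p) → ℝ)
    (θstar : EuclideanSpace ℝ (Fin p)) (hmin : ∀ x, f θstar ≤ f x) :
    gradient f θstar = 0 := by
  have hloc : IsLocalMin f θstar := Filter.Eventually.of_forall hmin
  have h0 : fderiv ℝ f θstar = 0 := hloc.fderiv_eq_zero
  show (toDual ℝ (EuclideanSpace ℝ (Fin p))).symm (fderiv ℝ f θstar) = 0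
  rw [h0]; simp

private lemma gradient_rep_aux (f : EuclideanSpace ℝ (Fin p) → ℝ) (hf : ContDiff ℝ 2 f)
    (θstar θ : EuclideanSpace ℝ (Fin p)) (h0 : gradient f θstar = 0) :
    gradient f θ = ∫ s in (0:ℝ)..1, hessOp f (θstar + s • (θ - θstar)) (θ - θstar) := by
  set d := θ - θstar with hd
  have hg : ContDiff ℝ 1 (gradient f) := contDiff_gradient_aux f hf
  have hderiv : ∀ s : ℝ, HasDerivAt (fun t : ℝ => gradient f (θstar + t • d))
      (hessOp f (θstar + s • d) d) s := by
    intro s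
    have h1 : HasDerivAt (fun t : ℝ => θstar + t • d) d s := by
      simpa using ((hasDerivAt_id s).smul_const d).const_add θstar
    have h2 : HasFDerivAt (gradient f) (hessOp f (θstar + s • d)) (θstar + s • d) :=
      (hg.differentiable one_ne_zero _).hasFDerivAt
    exact h2.comp_hasDerivAt s h1
  have hcont : Continuous (fun s : ℝ => hessOp f (θstar + s • d) d) := by
    have h3 : Continuous (fun s : ℝ => θstar + s • d) := by continuity
    exact ((hg.continuous_fderiv one_ne_zero).comp h3).clm_apply continuous_const
  have key := intervalIntegral.integral_eq_sub_of_hasDerivAt (fun s _ => hderiv s)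
    (hcont.intervalIntegrable 0 1)
  rw [key]
  simp [h0, hd]

private lemma arith2_aux (L Q X Y : ℝ) (hL : 0 < L)
    (h0 : 0 ≤ Q - 1/L*X - (1/L*X - 1/L*(1/L*Y))) (hY : Y ≤ L*X) : X ≤ L*Q := by
  have h1 : 1/L * Y ≤ X := by
    have := mul_le_mul_of_nonneg_left hY (le_of_lt (by positivity : (0:ℝ) < 1/L))
    calc 1/L * Y ≤ 1/L * (L*X) := this
      _ = X := by field_simp
  have h2 : 1/L * (1/L * Y) ≤ 1/L * X :=
    mul_le_mul_of_nonneg_left h1 (le_of_lt (by positivity : (0:ℝ) < 1/L))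
  have h3 : 0 ≤ Q - 1/L * X := by linarith
  have h4 := mul_le_mul_of_nonneg_left h3 hL.le
  have h5 : L * (1/L * X) = X := by field_simp
  nlinarith [h4]

private lemma arith1_aux (L κp Q r B : ℝ) (hL : 0 < L) (hκp : 1 ≤ κp)
    (hB2 : B^2 ≤ L*Q) (hQl : L/κp * r^2 ≤ Q) :
    r^2 - 2/L*Q + B^2/L^2 ≤ ((1 - 1/(2*κp))*r)^2 := by
  have hκ0 : (0:ℝ) < κp := lt_of_lt_of_le one_pos hκp
  have e2 : B^2/L^2 ≤ Q/L := by
    calc B^2/L^2 ≤ (L*Q)/L^2 := by gcongr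
      _ = Q/L := by field_simp
  have e3 : 1/κp * r^2 ≤ Q/L := by
    calc 1/κp * r^2 = (L/κp * r^2)/L := by field_simp
      _ ≤ Q/L := by gcongr
  have h2Q : 2/L*Q = 2*(Q/L) := by ring
  have hdiff : ((1 - 1/(2*κp))*r)^2 - (1 - 1/κp)*r^2 = (r/(2*κp))^2 := by
    field_simp; ring
  nlinarith [sq_nonneg (r/(2*κp))]

private lemma projE_inner_aux (S : Submodule ℝ (EuclideanSpace ℝ (Fin p)))
    (a b : EuclideanSpace ℝ (Fin p)) : ⟪projE S a, b⟫ = ⟪a, projE S b⟫ :=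
  S.inner_starProjection_left_eq_right a b

private lemma projE_idem_aux (S : Submodule ℝ (EuclideanSpace ℝ (Fin p)))
    (v : EuclideanSpace ℝ (Fin p)) : projE S (projE S v) = projE S v := by
  simp [projE, Submodule.orthogonalProjectionOnto_mem_subspace_eq_self]
  exact congrArg (fun q => q v) S.isIdempotentElem_starProjection

private lemma projE_norm_le_aux (S : Submodule ℝ (EuclideanSpace ℝ (Fin p)))
    (v : EuclideanSpace ℝ (Fin p)) : ‖projE S v‖ ≤ ‖v‖ := by
  calc ‖projE S v‖ = ‖S.orthogonalProjectionOnto v‖ := rfl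
    _ ≤ ‖S.orthogonalProjectionOnto‖ * ‖v‖ := (S.orthogonalProjectionOnto).le_opNorm v
    _ ≤ 1 * ‖v‖ := mul_le_mul_of_nonneg_right (Submodule.orthogonalProjectionOnto_norm_le S) (norm_nonneg v)
    _ = ‖v‖ := one_mul _

private lemma projE_clm_aux (S : Submodule ℝ (EuclideanSpace ℝ (Fin p)))
    (v : EuclideanSpace ℝ (Fin p)) :
    projE S v = (S.subtypeL.comp (S.orthogonalProjectionOnto)) v := rfl

end Aux

/-- **Stable step: top-subspace residual recursion** (inequality (7) in the proof of
Theorem 2).  Under the bimodal Hessian condition, a gradient step with the stable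
learning rate `1/L` satisfies
`‖Π_S(θ − (1/L)∇f(θ) − θ⋆)‖ ≤ (1 − 1/(2κ₊))‖Π_S(θ − θ⋆)‖ + (ε/L)‖Π_{Sᶜ}(θ − θ⋆)‖`. -/
theorem stable_step_top_subspace
    {p : ℕ} (f : EuclideanSpace ℝ (Fin p) → ℝ)
    (S : Submodule ℝ (EuclideanSpace ℝ (Fin p)))
    (L μ κp κm ε : ℝ) (hbim : BimodalHessian f S L μ κp κm ε)
    (θstar : EuclideanSpace ℝ (Fin p)) (hmin : ∀ x, f θstar ≤ f x)
    (θ : EuclideanSpace ℝ (Fin p)) :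
    ‖projE S (θ - (1 / L) • gradient f θ - θstar)‖
      ≤ (1 - 1 / (2 * κp)) * ‖projE S (θ - θstar)‖ + (ε / L) * ‖projE Sᗮ (θ - θstar)‖ := by
  obtain ⟨hμ, hμL, hκp, hκm, hε, hf, hall, hSbd, hSperp, hcross⟩ := hbim
  have hL : 0 < L := hμ.trans hμL
  have hκp0 : 0 < κp := lt_of_lt_of_le one_pos hκp
  set d : EuclideanSpace ℝ (Fin p) := θ - θstar with hd
  set γ : ℝ → EuclideanSpace ℝ (Fin p) := fun s => θstar + s • d with hγ
  have hg : ContDiff ℝ 1 (gradient f) := contDiff_gradient_aux f hf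
  have hγc : Continuous γ := by
    rw [hγ]; continuity
  have hcont : ∀ v : EuclideanSpace ℝ (Fin p),
      Continuous (fun s : ℝ => hessOp f (γ s) v) :=
    fun v => (((hg.continuous_fderiv one_ne_zero).comp hγc).clm_apply continuous_const)
  have hInt : ∀ v : EuclideanSpace ℝ (Fin p),
      IntervalIntegrable (fun s : ℝ => hessOp f (γ s) v) MeasureTheory.volume 0 1 :=
    fun v => (hcont v).intervalIntegrable 0 1
  set Hv : EuclideanSpace ℝ (Fin p) → EuclideanSpace ℝ (Fin p) :=
    fun v => ∫ s in (0:ℝ)..1, hessOp f (γ s) v with hHv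
  have hgrad : gradient f θ = Hv d := by
    simpa [hHv, hγ, ← hd] using
      gradient_rep_aux f hf θstar θ (gradient_min_zero_aux f θstar hmin)
  -- linearity of Hv
  have hHv_add : ∀ a b, Hv (a + b) = Hv a + Hv b := by
    intro a b
    simp only [hHv, map_add]
    exact intervalIntegral.integral_add (hInt a) (hInt b)
  have hHv_sub : ∀ a b, Hv (a - b) = Hv a - Hv b := by
    intro a b
    simp only [hHv, map_sub]
    exact intervalIntegral.integral_sub (hInt a) (hInt b)
  have hHv_smul : ∀ (c : ℝ) a, Hv (c • a) = c • Hv a := by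
    intro c a
    simp only [hHv, map_smul]
    exact intervalIntegral.integral_smul c _
  -- inner products with Hv as integrals
  have hinner : ∀ a b, ⟪a, Hv b⟫ = ∫ s in (0:ℝ)..1, ⟪a, hessOp f (γ s) b⟫ := by
    intro a b
    have := (innerSL ℝ a).intervalIntegral_comp_comm (hInt b)
    simpa [hHv] using this.symm
  have hIc : ∀ a b, IntervalIntegrable (fun s : ℝ => ⟪a, hessOp f (γ s) b⟫)
      MeasureTheory.volume 0 1 :=
    fun a b => (continuous_const.inner (hcont b)).intervalIntegrable 0 1
  -- quadratic form bounds for Hv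
  have hQub : ∀ v, ⟪v, Hv v⟫ ≤ L * ‖v‖ ^ 2 := by
    intro v
    rw [hinner]
    calc (∫ s in (0:ℝ)..1, ⟪v, hessOp f (γ s) v⟫)
        ≤ ∫ _s in (0:ℝ)..1, L * ‖v‖ ^ 2 := by
          apply intervalIntegral.integral_mono_on (by norm_num) (hIc v v)
            intervalIntegrable_const
          intro s _
          exact (hall (γ s) v).2
      _ = L * ‖v‖ ^ 2 := by simp
  have hQ0 : ∀ v, 0 ≤ ⟪v, Hv v⟫ := by
    intro v
    rw [hinner]
    apply intervalIntegral.integral_nonneg (by norm_num)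
    intro s _
    exact le_trans (by positivity) (hall (γ s) v).1
  -- symmetry of Hv
  have hHsymm : ∀ a b, ⟪a, Hv b⟫ = ⟪b, Hv a⟫ := by
    intro a b
    rw [hinner, hinner]
    exact intervalIntegral.integral_congr fun s _ => hessOp_symm_aux f hf (γ s) a b
  set u : EuclideanSpace ℝ (Fin p) := projE S d with hu
  set w : EuclideanSpace ℝ (Fin p) := projE Sᗮ d with hw
  have hQlbu : L / κp * ‖u‖ ^ 2 ≤ ⟪u, Hv u⟫ := by
    rw [hinner]
    calc L / κp * ‖u‖ ^ 2 = ∫ _s in (0:ℝ)..1, L / κp * ‖u‖ ^ 2 := by simp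
      _ ≤ ∫ s in (0:ℝ)..1, ⟪u, hessOp f (γ s) u⟫ := by
          apply intervalIntegral.integral_mono_on (by norm_num)
            intervalIntegrable_const (hIc u u)
          intro s _
          have := (hSbd (γ s) d).1
          rwa [← hu] at this
  set x : EuclideanSpace ℝ (Fin p) := Hv u with hx
  -- key bound ‖x‖² ≤ L * Q
  have hux : ⟪u, Hv x⟫ = ‖x‖ ^ 2 := by
    rw [hHsymm u x, ← hx, real_inner_self_eq_norm_sq]
  have hxQ : ‖x‖ ^ 2 ≤ L * ⟪u, x⟫ := by
    have h0 : 0 ≤ ⟪u - (1/L) • x, Hv (u - (1/L) • x)⟫ := hQ0 _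
    rw [hHv_sub, hHv_smul, inner_sub_left, inner_sub_right, inner_sub_right,
      real_inner_smul_left, real_inner_smul_left, real_inner_smul_right,
      real_inner_smul_right, hux, ← hx, real_inner_self_eq_norm_sq] at h0
    have h2 : ⟪x, Hv x⟫ ≤ L * ‖x‖ ^ 2 := hQub x
    exact arith2_aux L ⟪u, x⟫ (‖x‖ ^ 2) ⟪x, Hv x⟫ hL h0 h2
  set b : EuclideanSpace ℝ (Fin p) := projE S x with hb
  have hPu : projE S u = u := by rw [hu]; exact projE_idem_aux S d
  have hub : ⟪u, b⟫ = ⟪u, x⟫ := by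
    rw [hb, ← projE_inner_aux, hPu]
  have hbx : ‖b‖ ≤ ‖x‖ := by rw [hb]; exact projE_norm_le_aux S x
  -- bound 1
  have hB2 : ‖b‖ ^ 2 ≤ L * ⟪u, x⟫ :=
    le_trans (pow_le_pow_left₀ (norm_nonneg b) hbx 2) hxQ
  have key1 : ‖u - (1/L) • b‖ ≤ (1 - 1/(2*κp)) * ‖u‖ := by
    have hexp : ‖u - (1/L) • b‖ ^ 2
        = ‖u‖ ^ 2 - 2 / L * ⟪u, x⟫ + ‖b‖ ^ 2 / L ^ 2 := by
      rw [@norm_sub_sq_real, real_inner_smul_right, norm_smul, hub]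
      rw [Real.norm_eq_abs, abs_of_nonneg (by positivity : (0:ℝ) ≤ 1/L)]
      ring
    have hsq : ‖u - (1/L) • b‖ ^ 2 ≤ ((1 - 1/(2*κp)) * ‖u‖) ^ 2 := by
      rw [hexp]
      exact arith1_aux L κp ⟪u, x⟫ ‖u‖ ‖b‖ hL hκp hB2 hQlbu
    have hrhs : 0 ≤ (1 - 1/(2*κp)) * ‖u‖ := by
      have h12 : 1/(2*κp) ≤ 1/2 := by
        rw [div_le_div_iff₀ (by positivity) (by norm_num)]
        linarith
      have : (0:ℝ) ≤ 1 - 1/(2*κp) := by linarith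
      positivity
    have := Real.sqrt_le_sqrt hsq
    rwa [Real.sqrt_sq (norm_nonneg _), Real.sqrt_sq hrhs] at this
  -- bound 2
  have hwfix : projE Sᗮ w = w := by rw [hw]; exact projE_idem_aux Sᗮ d
  have hPSint : projE S (Hv w) = ∫ s in (0:ℝ)..1, projE S (hessOp f (γ s) w) := by
    rw [projE_clm_aux]
    rw [hHv]
    rw [← (S.subtypeL.comp (S.orthogonalProjectionOnto)).intervalIntegral_comp_comm (hInt w)]
    simp only [← projE_clm_aux]
  have hbnd2 : ‖projE S (Hv w)‖ ≤ ε * ‖w‖ := by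
    rw [hPSint]
    have hb2 := intervalIntegral.norm_integral_le_of_norm_le_const
      (C := ε * ‖w‖) (a := (0:ℝ)) (b := 1)
      (f := fun s => projE S (hessOp f (γ s) w)) ?_
    · simpa using hb2
    · intro s _
      have h := hcross (γ s) w
      rwa [hwfix] at h
  -- assemble
  have hduw : d = u + w := by
    rw [hu, hw, projE, projE]
    exact (S.starProjection_add_starProjection_orthogonal d).symm
  have hvec : θ - (1 / L) • gradient f θ - θstar = d - (1/L) • Hv d := by
    rw [hgrad, sub_right_comm, ← hd]
  have hHvd : Hv d = Hv u + Hv w := by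
    calc Hv d = Hv (u + w) := by rw [← hduw]
      _ = Hv u + Hv w := hHv_add u w
  have hproj : projE S (d - (1/L) • Hv d)
      = (u - (1/L) • b) - (1/L) • projE S (Hv w) := by
    rw [hHvd, projE_clm_aux, map_sub, map_smul, map_add]
    simp only [← projE_clm_aux]
    rw [← hu, smul_add, ← hx, ← hb]
    abel
  rw [hvec, hproj]
  have htri : ‖(u - (1/L) • b) - (1/L) • projE S (Hv w)‖
      ≤ ‖u - (1/L) • b‖ + ‖(1/L) • projE S (Hv w)‖ := norm_sub_le _ _
  have hsm : ‖(1/L) • projE S (Hv w)‖ ≤ ε / L * ‖w‖ := by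
    rw [norm_smul, Real.norm_eq_abs, abs_of_nonneg (by positivity : (0:ℝ) ≤ 1/L)]
    calc 1/L * ‖projE S (Hv w)‖ ≤ 1/L * (ε * ‖w‖) := by
          apply mul_le_mul_of_nonneg_left hbnd2 (by positivity)
      _ = ε / L * ‖w‖ := by ring
  calc ‖(u - (1/L) • b) - (1/L) • projE S (Hv w)‖
      ≤ ‖u - (1/L) • b‖ + ‖(1/L) • projE S (Hv w)‖ := htri
    _ ≤ (1 - 1/(2*κp)) * ‖u‖ + ε / L * ‖w‖ := add_le_add key1 hsm
    _ = (1 - 1 / (2 * κp)) * ‖u‖ + (ε / L) * ‖w‖ := by ring
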